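/- For every permutation w of {1,...,2n} with crossout marking, z(w) = n² + ∑_{i=1}^n (h_i(p_A(w)) - 1) - ab(w) - bb(w), where z(w) = #{i<j : w(i)<w(j), i marked B}, ab(w) counts inversions i<j with i marked A and j marked B, and bb(w) counts inversions with both marked B. -/

import Mathlib

open Finset

/-- `D ⊆ {1,…,L}` is the set of down steps of a Dyck path of length `L`:
it has `L/2` elements and every prefix has at least as many up steps as down steps. -/
def IsDyck (L : ℕ) (D : Finset ℕ) : Prop :=
  D ⊆ Finset.Icc 1 L ∧ 2 * D.card = L ∧ ∀ k ≤ L, 2 * (D.filter (· ≤ k)).card ≤ k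

instance (L : ℕ) : DecidablePred (IsDyck L) := fun D => by
  unfold IsDyck; infer_instance

/-- The collection of all Dyck paths (encoded by their down-step sets) of length `L`. -/
def dyckPaths (L : ℕ) : Finset (Finset ℕ) :=
  (Finset.Icc 1 L).powerset.filter (IsDyck L)

/-- The position (in `{1,…,L}`) of the `i`-th down step (`1`-indexed). -/
def dstep (D : Finset ℕ) (i : ℕ) : ℕ := (D.sort (· ≤ ·)).getD (i - 1) 0

/-- The height `h_i` of the `i`-th down step of a Dyck path:  the step goes from
`(d_i - 1, h_i)` to `(d_i, h_i - 1)`; equivalently `h_i = d_i + 1 - 2 i`. -/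
def ht (D : Finset ℕ) (i : ℕ) : ℕ := dstep D i + 1 - 2 * i

/-- The modified height `h_i^*`: equal to `h_i - 1` if there is no up step to the right of
the `i`-th down step, and to `h_i` otherwise. -/
def hstar (L : ℕ) (D : Finset ℕ) (i : ℕ) : ℕ :=
  if Finset.Ioc (dstep D i) L ⊆ D then ht D i - 1 else ht D i

/-- `crossout w k` is the pair (positions marked A, positions marked B) after `k` rounds of
the crossout procedure: in each round, first mark B at the unmarked position with the smallest
value `w i`, then mark A at the leftmost unmarked position. -/
def crossout {N : ℕ} (w : Equiv.Perm (Fin N)) : ℕ → Finset (Fin N) × Finset (Fin N)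
  | 0 => (∅, ∅)
  | k + 1 =>
    let p := crossout w k
    let u := (Finset.univ : Finset (Fin N)) \ (p.1 ∪ p.2)
    if hu : u.Nonempty then
      let b := w.symm ((u.image w).min' (hu.image _))
      if ha : (u.erase b).Nonempty then
        (insert ((u.erase b).min' ha) p.1, insert b p.2)
      else (p.1, insert b p.2)
    else p

/-- The set of positions marked A under the crossout procedure. -/
def markA {N : ℕ} (w : Equiv.Perm (Fin N)) : Finset (Fin N) := (crossout w N).1

/-- The set of positions marked B under the crossout procedure. -/
def markB {N : ℕ} (w : Equiv.Perm (Fin N)) : Finset (Fin N) := (crossout w N).2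

/-- Down-step set of Alice's path `p_A(w)`:  the values (in `{1,…,N}`) at positions marked A. -/
def pAset {N : ℕ} (w : Equiv.Perm (Fin N)) : Finset ℕ :=
  (markA w).image (fun a => Fin.val (w a) + 1)

/-- Down-step set of Bob's path `p_B(w)`:  `{b + 1 : b marked B} ∪ {N + 2}`
(positions taken in `{1,…,N}`, so `b + 1` becomes `(b : ℕ) + 2`). -/
def pBset {N : ℕ} (w : Equiv.Perm (Fin N)) : Finset ℕ :=
  insert (N + 2) ((markB w).image (fun b => Fin.val b + 2))

/-- Number of AA inversions of `w`. -/
def aaInv {N : ℕ} (w : Equiv.Perm (Fin N)) : ℕ :=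
  (Finset.univ.filter (fun p : Fin N × Fin N =>
    p.1 < p.2 ∧ w p.2 < w p.1 ∧ p.1 ∈ markA w ∧ p.2 ∈ markA w)).card

/-- Number of BB inversions of `w`. -/
def bbInv {N : ℕ} (w : Equiv.Perm (Fin N)) : ℕ :=
  (Finset.univ.filter (fun p : Fin N × Fin N =>
    p.1 < p.2 ∧ w p.2 < w p.1 ∧ p.1 ∈ markB w ∧ p.2 ∈ markB w)).card

/-- Number of AB inversions of `w`. -/
def abInv {N : ℕ} (w : Equiv.Perm (Fin N)) : ℕ :=
  (Finset.univ.filter (fun p : Fin N × Fin N =>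
    p.1 < p.2 ∧ w p.2 < w p.1 ∧ p.1 ∈ markA w ∧ p.2 ∈ markB w)).card

/-- Total number of inversions of `w`. -/
def invW {N : ℕ} (w : Equiv.Perm (Fin N)) : ℕ :=
  (Finset.univ.filter (fun p : Fin N × Fin N => p.1 < p.2 ∧ w p.2 < w p.1)).card

/-- The statistic `z(w) = #{i < j : w i < w j and i is marked B}`. -/
def zstat {N : ℕ} (w : Equiv.Perm (Fin N)) : ℕ :=
  (Finset.univ.filter (fun p : Fin N × Fin N =>
    p.1 < p.2 ∧ w p.1 < w p.2 ∧ p.1 ∈ markB w)).card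

/-- Label carried by the down step of `p_A` corresponding to the A-position `a`:
one plus the number of A-positions to the left of `a` with larger value. -/
def labelA {N : ℕ} (w : Equiv.Perm (Fin N)) (a : Fin N) : ℕ :=
  1 + ((markA w).filter (fun a' => a' < a ∧ w a < w a')).card

/-- The label sequence `ℓ` of `p_A(w)`: `ellSeq w r` is the label on the `r`-th down step. -/
def ellSeq {N : ℕ} (w : Equiv.Perm (Fin N)) (r : ℕ) : ℕ :=
  ∑ a ∈ (markA w).filter (fun a => Fin.val (w a) + 1 = dstep (pAset w) r), labelA w a

/-- Label carried by the down step of `p_B` corresponding to the B-position `b`: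
one plus the number of B-positions to the right of `b` with smaller value. -/
def labelB {N : ℕ} (w : Equiv.Perm (Fin N)) (b : Fin N) : ℕ :=
  1 + ((markB w).filter (fun b' => w b' < w b ∧ b < b')).card

/-- The label sequence `m` of `p_B(w)`: `emSeq w r` is the label on the `r`-th down step. -/
def emSeq {N : ℕ} (w : Equiv.Perm (Fin N)) (r : ℕ) : ℕ :=
  ∑ b ∈ (markB w).filter (fun b => Fin.val b + 2 = dstep (pBset w) r), labelB w b

/-- The `q`-integer `[k]_q = 1 + q + ⋯ + q^{k-1}` in `ℤ[q]`. -/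
noncomputable def qint (k : ℕ) : Polynomial ℤ := ∑ j ∈ Finset.range k, Polynomial.X ^ j

/-- The `q`-integer `[k]` in the variable `X v` of the two-variable polynomial ring. -/
noncomputable def qint2 (v : Fin 2) (k : ℕ) : MvPolynomial (Fin 2) ℤ :=
  ∑ j ∈ Finset.range k, (MvPolynomial.X v) ^ j

/-- `M` is a perfect matching of `{1,…,2n}`: a family of pairwise disjoint 2-element sets
whose union is `{1,…,2n}`. -/
def IsMatching (n : ℕ) (M : Finset (Finset ℕ)) : Prop :=
  (∀ e ∈ M, e.card = 2) ∧ (M : Set (Finset ℕ)).PairwiseDisjoint id ∧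
    M.biUnion id = Finset.Icc 1 (2 * n)

section StmtAux

variable {n : ℕ}

private lemma crossout_inv (w : Equiv.Perm (Fin (2 * n))) :
    ∀ k, k ≤ n →
    ((crossout w k).1).card = k ∧ ((crossout w k).2).card = k ∧
    Disjoint (crossout w k).1 (crossout w k).2 ∧
    ∀ t : ℕ, ((crossout w k).1.filter (fun a => (w a : ℕ) < t)).card ≤
      ((crossout w k).2.filter (fun b => (w b : ℕ) < t)).card := by
  intro k
  induction k with
  | zero => intro _; refine ⟨by simp [crossout], by simp [crossout], by simp [crossout], ?_⟩
            intro t; simp [crossout]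
  | succ k ih =>
    intro hk
    obtain ⟨hA, hB, hdisj, hinv⟩ := ih (Nat.le_of_succ_le hk)
    set A := (crossout w k).1 with hAdef
    set B := (crossout w k).2 with hBdef
    set u := (Finset.univ : Finset (Fin (2*n))) \ (A ∪ B) with hudef
    have hcardu : u.card = 2 * n - 2 * k := by
      rw [hudef, card_sdiff_of_subset (subset_univ _), card_univ, Fintype.card_fin,
        card_union_of_disjoint hdisj, hA, hB]
      ring_nf
    have h2 : 2 ≤ u.card := by omega
    have hu : u.Nonempty := card_pos.mp (by omega)
    set b := w.symm ((u.image w).min' (hu.image w)) with hbdef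
    have hbu : b ∈ u := by
      have : (u.image w).min' (hu.image w) ∈ u.image w := min'_mem _ _
      obtain ⟨x, hx, hwx⟩ := mem_image.mp this
      rw [hbdef, ← hwx]; simpa using hx
    have hmin : ∀ x ∈ u, w b ≤ w x := by
      intro x hx
      rw [hbdef, Equiv.apply_symm_apply]
      exact min'_le _ _ (mem_image_of_mem w hx)
    have ha : (u.erase b).Nonempty := by
      rw [← card_pos, card_erase_of_mem hbu]; omega
    set a' := (u.erase b).min' ha with hadef
    have ha' : a' ∈ u.erase b := min'_mem _ _
    have hane : a' ≠ b := (mem_erase.mp ha').1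
    have hau : a' ∈ u := (mem_erase.mp ha').2
    have hstep : crossout w (k+1) = (insert a' A, insert b B) := by
      show (let p := crossout w k;
        let u' := (Finset.univ : Finset (Fin (2*n))) \ (p.1 ∪ p.2);
        if hu : u'.Nonempty then
          let b := w.symm ((u'.image w).min' (hu.image _));
          if ha : (u'.erase b).Nonempty then
            (insert ((u'.erase b).min' ha) p.1, insert b p.2)
          else (p.1, insert b p.2)
        else p) = _
      simp only []
      rw [dif_pos hu, dif_pos ha]
    have hanA : a' ∉ A := by
      have := hau; rw [hudef, mem_sdiff, mem_union] at this; tauto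
    have hanB : a' ∉ B := by
      have := hau; rw [hudef, mem_sdiff, mem_union] at this; tauto
    have hbnA : b ∉ A := by
      have := hbu; rw [hudef, mem_sdiff, mem_union] at this; tauto
    have hbnB : b ∉ B := by
      have := hbu; rw [hudef, mem_sdiff, mem_union] at this; tauto
    have hwba : w b < w a' := by
      exact lt_of_le_of_ne (hmin a' hau) (fun h => hane (w.injective h.symm))
    rw [hstep]
    refine ⟨?_, ?_, ?_, ?_⟩
    · simp [card_insert_of_notMem hanA, hA]
    · simp [card_insert_of_notMem hbnB, hB]
    · rw [disjoint_insert_left, disjoint_insert_right]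
      exact ⟨by simp [mem_insert, hane, hanB], hbnA, hdisj⟩
    · intro t
      rw [filter_insert, filter_insert]
      by_cases hc : (w a' : ℕ) < t
      · have hcb : (w b : ℕ) < t := lt_of_le_of_lt (Nat.le_of_lt (by exact_mod_cast hwba)) hc
        rw [if_pos hc, if_pos hcb, card_insert_of_notMem (fun h => hanA (mem_filter.mp h).1),
          card_insert_of_notMem (fun h => hbnB (mem_filter.mp h).1)]
        exact Nat.succ_le_succ (hinv t)
      · rw [if_neg hc]
        refine le_trans (hinv t) ?_
        split
        · exact le_trans (card_le_card (subset_insert _ _)) le_rfl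
        · exact le_rfl

private lemma crossout_union (w : Equiv.Perm (Fin (2 * n))) :
    (crossout w n).1 ∪ (crossout w n).2 = Finset.univ := by
  obtain ⟨hA, hB, hdisj, -⟩ := crossout_inv w n le_rfl
  apply Finset.eq_univ_of_card
  rw [card_union_of_disjoint hdisj, hA, hB, Fintype.card_fin]
  omega

private lemma crossout_stab (w : Equiv.Perm (Fin (2 * n))) :
    ∀ m, n ≤ m → crossout w m = crossout w n := by
  intro m
  induction m with
  | zero => intro hm; have h0 : n = 0 := Nat.le_zero.mp hm; subst h0; rfl
  | succ m ih =>
    intro hm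
    rcases Nat.lt_or_ge n (m+1) with h | h
    · have hnm : n ≤ m := Nat.lt_succ_iff.mp h
      have hu : (Finset.univ : Finset (Fin (2*n))) \
          ((crossout w m).1 ∪ (crossout w m).2) = ∅ := by
        rw [ih hnm, crossout_union, sdiff_self, Finset.bot_eq_empty]
      show (let p := crossout w m;
        let u' := (Finset.univ : Finset (Fin (2*n))) \ (p.1 ∪ p.2);
        if hu : u'.Nonempty then
          let b := w.symm ((u'.image w).min' (hu.image _));
          if ha : (u'.erase b).Nonempty then
            (insert ((u'.erase b).min' ha) p.1, insert b p.2)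
          else (p.1, insert b p.2)
        else p) = crossout w n
      simp only []
      rw [dif_neg (by rw [hu]; exact Finset.not_nonempty_empty), ih hnm]
    · have he : n = m + 1 := Nat.le_antisymm hm h
      rw [← he]

private lemma markA_eq (w : Equiv.Perm (Fin (2 * n))) : markA w = (crossout w n).1 := by
  unfold markA; rw [crossout_stab w (2*n) (by omega)]

private lemma markB_eq (w : Equiv.Perm (Fin (2 * n))) : markB w = (crossout w n).2 := by
  unfold markB; rw [crossout_stab w (2*n) (by omega)]

private lemma markA_card (w : Equiv.Perm (Fin (2 * n))) : (markA w).card = n := by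
  rw [markA_eq]; exact (crossout_inv w n le_rfl).1

private lemma markB_card (w : Equiv.Perm (Fin (2 * n))) : (markB w).card = n := by
  rw [markB_eq]; exact (crossout_inv w n le_rfl).2.1

private lemma mark_disjoint (w : Equiv.Perm (Fin (2 * n))) :
    Disjoint (markA w) (markB w) := by
  rw [markA_eq, markB_eq]; exact (crossout_inv w n le_rfl).2.2.1

private lemma mark_union (w : Equiv.Perm (Fin (2 * n))) :
    markA w ∪ markB w = Finset.univ := by
  rw [markA_eq, markB_eq]; exact crossout_union w

private lemma mark_filter_le (w : Equiv.Perm (Fin (2 * n))) (t : ℕ) :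
    ((markA w).filter (fun a => (w a : ℕ) < t)).card ≤
      ((markB w).filter (fun b => (w b : ℕ) < t)).card := by
  rw [markA_eq, markB_eq]; exact (crossout_inv w n le_rfl).2.2.2 t

end StmtAux
section StmtCount

variable {n : ℕ}

private lemma split_card {α : Type*} (s : Finset α) (P Q : α → Prop)
    [DecidablePred P] [DecidablePred Q] :
    (s.filter P).card = (s.filter fun a => P a ∧ Q a).card +
      (s.filter fun a => P a ∧ ¬ Q a).card := by
  rw [← Finset.filter_filter, ← Finset.filter_filter,
    Finset.card_filter_add_card_filter_not (s := s.filter P) (p := Q)]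

private lemma double_pairs {N : ℕ} (s : Finset (Fin N)) :
    2 * ((Finset.univ.filter (fun p : Fin N × Fin N =>
      p.1 < p.2 ∧ p.1 ∈ s ∧ p.2 ∈ s)).card) = s.card * s.card - s.card := by
  have hswap : ((Finset.univ.filter (fun p : Fin N × Fin N =>
      p.1 < p.2 ∧ p.1 ∈ s ∧ p.2 ∈ s)).card)
      = ((Finset.univ.filter (fun p : Fin N × Fin N =>
      p.2 < p.1 ∧ p.1 ∈ s ∧ p.2 ∈ s)).card) := by
    refine Finset.card_equiv (Equiv.prodComm _ _) (fun p => ?_)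
    simp only [Finset.mem_filter, Finset.mem_univ, true_and, Equiv.prodComm_apply,
      Prod.fst_swap, Prod.snd_swap]
    tauto
  have hoff : (Finset.univ.filter (fun p : Fin N × Fin N =>
      p.1 ≠ p.2 ∧ p.1 ∈ s ∧ p.2 ∈ s)) = s.offDiag := by
    ext p
    simp only [Finset.mem_filter, Finset.mem_univ, true_and, Finset.mem_offDiag]
    tauto
  have hsp := split_card (Finset.univ : Finset (Fin N × Fin N))
    (fun p => p.1 ≠ p.2 ∧ p.1 ∈ s ∧ p.2 ∈ s) (fun p => p.1 < p.2)
  have e1 : (Finset.univ.filter (fun p : Fin N × Fin N =>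
      (p.1 ≠ p.2 ∧ p.1 ∈ s ∧ p.2 ∈ s) ∧ p.1 < p.2))
      = Finset.univ.filter (fun p : Fin N × Fin N => p.1 < p.2 ∧ p.1 ∈ s ∧ p.2 ∈ s) := by
    ext p
    simp only [Finset.mem_filter, Finset.mem_univ, true_and]
    constructor
    · rintro ⟨⟨_, h2, h3⟩, h4⟩; exact ⟨h4, h2, h3⟩
    · rintro ⟨h1, h2, h3⟩; exact ⟨⟨ne_of_lt h1, h2, h3⟩, h1⟩
  have e2 : (Finset.univ.filter (fun p : Fin N × Fin N =>
      (p.1 ≠ p.2 ∧ p.1 ∈ s ∧ p.2 ∈ s) ∧ ¬ p.1 < p.2))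
      = Finset.univ.filter (fun p : Fin N × Fin N => p.2 < p.1 ∧ p.1 ∈ s ∧ p.2 ∈ s) := by
    ext p
    simp only [Finset.mem_filter, Finset.mem_univ, true_and]
    constructor
    · rintro ⟨⟨h1, h2, h3⟩, h4⟩
      exact ⟨lt_of_le_of_ne (not_lt.mp h4) (Ne.symm h1), h2, h3⟩
    · rintro ⟨h1, h2, h3⟩
      exact ⟨⟨(ne_of_lt h1).symm, h2, h3⟩, not_lt.mpr (le_of_lt h1)⟩
  rw [hoff, e1, e2] at hsp
  rw [← Finset.offDiag_card, hsp, ← hswap]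
  ring

private lemma count_main (w : Equiv.Perm (Fin (2 * n))) :
    zstat w + abInv w + bbInv w = ∑ a ∈ markA w, ((w a : ℕ)) := by
  have hmemB : ∀ x : Fin (2*n), x ∈ markB w ↔ x ∉ markA w := by
    intro x
    constructor
    · intro hx hx'; exact (Finset.disjoint_left.mp (mark_disjoint w)) hx' hx
    · intro hx
      have hx2 : x ∈ markA w ∪ markB w := by rw [mark_union w]; exact mem_univ x
      rcases mem_union.mp hx2 with h | h
      · exact absurd h hx
      · exact h
  have hval : ∀ v : Fin (2*n), (univ.filter fun y => w y < v).card = (v : ℕ) := by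
    intro v
    have himg : (univ.filter fun y => w y < v) = (Finset.Iio v).image w.symm := by
      ext y
      simp only [mem_filter, mem_univ, true_and, mem_image, Finset.mem_Iio]
      constructor
      · intro h; exact ⟨w y, h, w.symm_apply_apply y⟩
      · rintro ⟨u, hu, rfl⟩; rwa [Equiv.apply_symm_apply]
    rw [himg, Finset.card_image_of_injective _ w.symm.injective, Fin.card_Iio]
  -- (c1) : card of big set S
  have hS : (univ.filter fun p : Fin (2*n) × Fin (2*n) => p.1 ∈ markA w ∧ w p.2 < w p.1).card
      = ∑ a ∈ markA w, ((w a : ℕ)) := by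
    rw [Finset.card_filter, Fintype.sum_prod_type]
    have hinner : ∀ x : Fin (2*n), (∑ y : Fin (2*n), if x ∈ markA w ∧ w y < w x then 1 else 0)
        = if x ∈ markA w then ((w x : ℕ)) else 0 := by
      intro x
      by_cases hx : x ∈ markA w
      · simp only [hx, true_and, if_pos]
        rw [← Finset.card_filter, hval]
      · simp [hx]
    rw [Finset.sum_congr rfl (fun x _ => hinner x), Finset.sum_ite_mem, univ_inter]
  -- (c2) : decompose S
  have hc2 : (univ.filter fun p : Fin (2*n) × Fin (2*n) =>
      p.1 ∈ markA w ∧ w p.2 < w p.1).card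
      = aaInv w + abInv w
        + (univ.filter fun p : Fin (2*n) × Fin (2*n) =>
            p.1 < p.2 ∧ w p.1 < w p.2 ∧ p.1 ∈ markA w ∧ p.2 ∈ markA w).card
        + (univ.filter fun p : Fin (2*n) × Fin (2*n) =>
            p.1 < p.2 ∧ w p.1 < w p.2 ∧ p.1 ∈ markB w ∧ p.2 ∈ markA w).card := by
    rw [split_card (Finset.univ : Finset (Fin (2*n) × Fin (2*n)))
      (fun p => p.1 ∈ markA w ∧ w p.2 < w p.1) (fun p => p.1 < p.2)]
    have e3 : (Finset.univ.filter (fun p : Fin (2*n) × Fin (2*n) =>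
        (p.1 ∈ markA w ∧ w p.2 < w p.1) ∧ ¬ p.1 < p.2))
        = Finset.univ.filter (fun p : Fin (2*n) × Fin (2*n) =>
          p.2 < p.1 ∧ w p.2 < w p.1 ∧ p.1 ∈ markA w) := by
      ext p
      simp only [Finset.mem_filter, Finset.mem_univ, true_and]
      constructor
      · rintro ⟨⟨h1, h2⟩, h3⟩
        have hne : p.2 ≠ p.1 := fun h => absurd h2 (by rw [h]; exact lt_irrefl _)
        exact ⟨lt_of_le_of_ne (not_lt.mp h3) hne, h2, h1⟩
      · rintro ⟨h1, h2, h3⟩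
        exact ⟨⟨h3, h2⟩, not_lt.mpr (le_of_lt h1)⟩
    have e4 : (Finset.univ.filter (fun p : Fin (2*n) × Fin (2*n) =>
        p.2 < p.1 ∧ w p.2 < w p.1 ∧ p.1 ∈ markA w)).card
        = (Finset.univ.filter (fun p : Fin (2*n) × Fin (2*n) =>
          p.1 < p.2 ∧ w p.1 < w p.2 ∧ p.2 ∈ markA w)).card := by
      refine Finset.card_equiv (Equiv.prodComm _ _) (fun p => ?_)
      simp only [Finset.mem_filter, Finset.mem_univ, true_and, Equiv.prodComm_apply,
        Prod.fst_swap, Prod.snd_swap]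
      try tauto
    rw [e3, e4]
    rw [split_card (Finset.univ : Finset (Fin (2*n) × Fin (2*n)))
      (fun p => (p.1 ∈ markA w ∧ w p.2 < w p.1) ∧ p.1 < p.2) (fun p => p.2 ∈ markA w)]
    rw [split_card (Finset.univ : Finset (Fin (2*n) × Fin (2*n)))
      (fun p => p.1 < p.2 ∧ w p.1 < w p.2 ∧ p.2 ∈ markA w) (fun p => p.1 ∈ markA w)]
    have eaa : (Finset.univ.filter (fun p : Fin (2*n) × Fin (2*n) =>
        ((p.1 ∈ markA w ∧ w p.2 < w p.1) ∧ p.1 < p.2) ∧ p.2 ∈ markA w))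
        = Finset.univ.filter (fun p : Fin (2*n) × Fin (2*n) =>
          p.1 < p.2 ∧ w p.2 < w p.1 ∧ p.1 ∈ markA w ∧ p.2 ∈ markA w) := by
      ext p; simp only [Finset.mem_filter, Finset.mem_univ, true_and]; tauto
    have eab : (Finset.univ.filter (fun p : Fin (2*n) × Fin (2*n) =>
        ((p.1 ∈ markA w ∧ w p.2 < w p.1) ∧ p.1 < p.2) ∧ ¬ p.2 ∈ markA w))
        = Finset.univ.filter (fun p : Fin (2*n) × Fin (2*n) =>
          p.1 < p.2 ∧ w p.2 < w p.1 ∧ p.1 ∈ markA w ∧ p.2 ∈ markB w) := by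
      ext p; simp only [Finset.mem_filter, Finset.mem_univ, true_and]
      have := hmemB p.2; tauto
    have enAA : (Finset.univ.filter (fun p : Fin (2*n) × Fin (2*n) =>
        (p.1 < p.2 ∧ w p.1 < w p.2 ∧ p.2 ∈ markA w) ∧ p.1 ∈ markA w))
        = Finset.univ.filter (fun p : Fin (2*n) × Fin (2*n) =>
          p.1 < p.2 ∧ w p.1 < w p.2 ∧ p.1 ∈ markA w ∧ p.2 ∈ markA w) := by
      ext p; simp only [Finset.mem_filter, Finset.mem_univ, true_and]; tauto
    have enBA : (Finset.univ.filter (fun p : Fin (2*n) × Fin (2*n) =>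
        (p.1 < p.2 ∧ w p.1 < w p.2 ∧ p.2 ∈ markA w) ∧ ¬ p.1 ∈ markA w))
        = Finset.univ.filter (fun p : Fin (2*n) × Fin (2*n) =>
          p.1 < p.2 ∧ w p.1 < w p.2 ∧ p.1 ∈ markB w ∧ p.2 ∈ markA w) := by
      ext p; simp only [Finset.mem_filter, Finset.mem_univ, true_and]
      have := hmemB p.1; tauto
    rw [eaa, eab, enAA, enBA]
    unfold aaInv abInv
    ring
  -- (c3) : decompose z
  have hc3 : zstat w
      = (univ.filter fun p : Fin (2*n) × Fin (2*n) =>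
            p.1 < p.2 ∧ w p.1 < w p.2 ∧ p.1 ∈ markB w ∧ p.2 ∈ markA w).card
        + (univ.filter fun p : Fin (2*n) × Fin (2*n) =>
            p.1 < p.2 ∧ w p.1 < w p.2 ∧ p.1 ∈ markB w ∧ p.2 ∈ markB w).card := by
    unfold zstat
    rw [split_card (Finset.univ : Finset (Fin (2*n) × Fin (2*n)))
      (fun p => p.1 < p.2 ∧ w p.1 < w p.2 ∧ p.1 ∈ markB w) (fun p => p.2 ∈ markA w)]
    congr 1
    · congr 1; ext p; simp only [Finset.mem_filter, Finset.mem_univ, true_and]; tauto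
    · congr 1; ext p; simp only [Finset.mem_filter, Finset.mem_univ, true_and]
      have := hmemB p.2; tauto
  -- (c4)(c5)
  have hc4 : (univ.filter fun p : Fin (2*n) × Fin (2*n) =>
        p.1 < p.2 ∧ p.1 ∈ markA w ∧ p.2 ∈ markA w).card
      = (univ.filter fun p : Fin (2*n) × Fin (2*n) =>
            p.1 < p.2 ∧ w p.1 < w p.2 ∧ p.1 ∈ markA w ∧ p.2 ∈ markA w).card + aaInv w := by
    rw [split_card (Finset.univ : Finset (Fin (2*n) × Fin (2*n)))
      (fun p => p.1 < p.2 ∧ p.1 ∈ markA w ∧ p.2 ∈ markA w) (fun p => w p.1 < w p.2)]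
    congr 1
    · congr 1; ext p; simp only [Finset.mem_filter, Finset.mem_univ, true_and]; tauto
    · unfold aaInv; congr 1; ext p
      simp only [Finset.mem_filter, Finset.mem_univ, true_and]
      constructor
      · rintro ⟨⟨h1, h2, h3⟩, h4⟩
        have hne : w p.1 ≠ w p.2 := fun h => (ne_of_lt h1) (w.injective h)
        exact ⟨h1, lt_of_le_of_ne (not_lt.mp h4) (Ne.symm hne), h2, h3⟩
      · rintro ⟨h1, h2, h3, h4⟩
        exact ⟨⟨h1, h3, h4⟩, not_lt.mpr (le_of_lt h2)⟩
  have hc5 : (univ.filter fun p : Fin (2*n) × Fin (2*n) =>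
        p.1 < p.2 ∧ p.1 ∈ markB w ∧ p.2 ∈ markB w).card
      = (univ.filter fun p : Fin (2*n) × Fin (2*n) =>
            p.1 < p.2 ∧ w p.1 < w p.2 ∧ p.1 ∈ markB w ∧ p.2 ∈ markB w).card + bbInv w := by
    rw [split_card (Finset.univ : Finset (Fin (2*n) × Fin (2*n)))
      (fun p => p.1 < p.2 ∧ p.1 ∈ markB w ∧ p.2 ∈ markB w) (fun p => w p.1 < w p.2)]
    congr 1
    · congr 1; ext p; simp only [Finset.mem_filter, Finset.mem_univ, true_and]; tauto
    · unfold bbInv; congr 1; ext p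
      simp only [Finset.mem_filter, Finset.mem_univ, true_and]
      constructor
      · rintro ⟨⟨h1, h2, h3⟩, h4⟩
        have hne : w p.1 ≠ w p.2 := fun h => (ne_of_lt h1) (w.injective h)
        exact ⟨h1, lt_of_le_of_ne (not_lt.mp h4) (Ne.symm hne), h2, h3⟩
      · rintro ⟨h1, h2, h3, h4⟩
        exact ⟨⟨h1, h3, h4⟩, not_lt.mpr (le_of_lt h2)⟩
  -- (c6)
  have hdA := double_pairs (markA w)
  have hdB := double_pairs (markB w)
  rw [markA_card] at hdA
  rw [markB_card] at hdB
  omega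

end StmtCount
section StmtRhs

variable {n : ℕ}

private lemma gauss : ∀ m : ℕ, ∑ i ∈ Finset.Icc 1 m, 2 * i = m * (m + 1) := by
  intro m
  induction m with
  | zero => simp
  | succ m ih =>
    rw [Finset.sum_Icc_succ_top (by omega : 1 ≤ m + 1), ih]
    ring

private lemma pA_filter_card (w : Equiv.Perm (Fin (2*n))) (t : ℕ) :
    ((pAset w).filter (· ≤ t)).card = ((markA w).filter (fun a => ((w a : ℕ)) < t)).card := by
  have hinj : Function.Injective (fun a : Fin (2*n) => (w a : ℕ) + 1) := by
    intro a b h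
    dsimp only at h
    exact w.injective (Fin.val_injective (by omega))
  unfold pAset
  rw [Finset.filter_image, Finset.card_image_of_injective _ hinj]
  rw [Finset.filter_congr (fun (a : Fin (2*n)) _ => (by omega :
    (w a : ℕ) + 1 ≤ t ↔ (w a : ℕ) < t))]

private lemma pA_dyck (w : Equiv.Perm (Fin (2*n))) (t : ℕ) :
    2 * ((pAset w).filter (· ≤ t)).card ≤ t := by
  rw [pA_filter_card]
  have hC : ((markA w).filter (fun a => ((w a : ℕ)) < t)).card
      + ((markB w).filter (fun a => ((w a : ℕ)) < t)).card
      = ((Finset.univ : Finset (Fin (2*n))).filter (fun a => ((w a : ℕ)) < t)).card := by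
    rw [← Finset.card_union_of_disjoint
      (Finset.disjoint_filter_filter (mark_disjoint w)), ← Finset.filter_union, mark_union]
  have hU : ((Finset.univ : Finset (Fin (2*n))).filter (fun a => ((w a : ℕ)) < t)).card ≤ t := by
    have h1 : ∀ a ∈ (Finset.univ : Finset (Fin (2*n))).filter (fun a => ((w a : ℕ)) < t),
        (fun a : Fin (2*n) => ((w a : ℕ))) a ∈ Finset.range t := by
      intro a ha
      simp only [Finset.mem_filter] at ha
      simpa using ha.2
    have h2 : Set.InjOn (fun a : Fin (2*n) => ((w a : ℕ)))
        ((Finset.univ : Finset (Fin (2*n))).filter (fun a => ((w a : ℕ)) < t)) := by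
      intro a _ b _ h
      dsimp only at h
      exact w.injective (Fin.val_injective h)
    have := Finset.card_le_card_of_injOn _ h1 h2
    simpa using this
  have := mark_filter_le w t
  omega

private lemma rhs_eq (w : Equiv.Perm (Fin (2*n))) :
    n ^ 2 + ∑ i ∈ Finset.Icc 1 n, (ht (pAset w) i - 1) = ∑ a ∈ markA w, ((w a : ℕ)) := by
  have hinj : Function.Injective (fun a : Fin (2*n) => (w a : ℕ) + 1) := by
    intro a b h
    dsimp only at h
    exact w.injective (Fin.val_injective (by omega))
  have hcardD : (pAset w).card = n := by
    unfold pAset; rw [Finset.card_image_of_injective _ hinj, markA_card]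
  set D := pAset w with hD
  set L := D.sort (· ≤ ·) with hL
  have hlen : L.length = n := by rw [hL, Finset.length_sort, hcardD]
  have hsorted : L.Pairwise (· ≤ ·) := Finset.pairwise_sort _ _
  have hnodup : L.Nodup := Finset.sort_nodup _ _
  have hdstep : ∀ i, dstep D i = L.getD (i - 1) 0 := fun i => rfl
  have hdge : ∀ i ∈ Finset.Icc 1 n, 2 * i ≤ dstep D i := by
    intro i hi
    rw [Finset.mem_Icc] at hi
    have hlt : i - 1 < L.length := by omega
    have hds : dstep D i = L[i-1] := by rw [hdstep, List.getD_eq_getElem L 0 hlt]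
    have hsub : i ≤ (D.filter (· ≤ dstep D i)).card := by
      have hmap := Finset.card_le_card_of_injOn (fun j => L.getD j 0)
        (s := Finset.range i) (t := D.filter (· ≤ dstep D i)) ?_ ?_
      · simpa using hmap
      · intro j hj
        rw [Finset.mem_coe, Finset.mem_range] at hj
        have hjl : j < L.length := by omega
        show L.getD j 0 ∈ D.filter (· ≤ dstep D i)
        rw [List.getD_eq_getElem L 0 hjl, Finset.mem_filter]
        constructor
        · exact (Finset.mem_sort (α := ℕ) (· ≤ ·)).mp (List.getElem_mem hjl)
        · rw [hds]
          have : L.get ⟨j, hjl⟩ ≤ L.get ⟨i-1, hlt⟩ :=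
            List.Pairwise.rel_get_of_le hsorted (Fin.mk_le_mk.mpr (by omega))
          simpa using this
      · intro a ha b hb hab
        rw [Finset.coe_range, Set.mem_Iio] at ha hb
        have hal : a < L.length := by omega
        have hbl : b < L.length := by omega
        dsimp only at hab
        rw [List.getD_eq_getElem L 0 hal, List.getD_eq_getElem L 0 hbl] at hab
        have := (List.Nodup.getElem_inj_iff hnodup).mp hab
        exact this
    have := pA_dyck w (dstep D i)
    rw [← hD] at this
    omega
  have hsum : ∑ i ∈ Finset.Icc 1 n, dstep D i = ∑ x ∈ D, x := by
    apply Finset.sum_nbij (i := fun i => dstep D i)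
    · intro i hi
      rw [Finset.mem_Icc] at hi
      have hlt : i - 1 < L.length := by omega
      rw [hdstep, List.getD_eq_getElem L 0 hlt]
      exact (Finset.mem_sort (α := ℕ) (· ≤ ·)).mp (List.getElem_mem hlt)
    · intro a ha b hb hab
      rw [Finset.coe_Icc, Set.mem_Icc] at ha hb
      have hal : a - 1 < L.length := by omega
      have hbl : b - 1 < L.length := by omega
      dsimp only at hab
      rw [hdstep, hdstep, List.getD_eq_getElem L 0 hal, List.getD_eq_getElem L 0 hbl] at hab
      have := (List.Nodup.getElem_inj_iff hnodup).mp hab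
      omega
    · intro x hx
      rw [Finset.mem_coe] at hx
      have hx2 : x ∈ L := (Finset.mem_sort (α := ℕ) (· ≤ ·)).mpr hx
      obtain ⟨j, hj, hxe⟩ := List.mem_iff_getElem.mp hx2
      refine ⟨j + 1, ?_, ?_⟩
      · rw [Finset.mem_coe, Finset.mem_Icc]; omega
      · show dstep D (j + 1) = x
        rw [hdstep, Nat.add_sub_cancel, List.getD_eq_getElem L 0 hj, hxe]
    · intro i _; rfl
  have hsum2 : ∑ x ∈ D, x = (∑ a ∈ markA w, ((w a : ℕ))) + n := by
    rw [hD]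
    unfold pAset
    rw [Finset.sum_image (fun a _ b _ h => hinj h), Finset.sum_add_distrib,
      Finset.sum_const, markA_card, smul_eq_mul, mul_one]
  have hterm : ∀ i ∈ Finset.Icc 1 n, ht D i - 1 = dstep D i - 2 * i := by
    intro i _; unfold ht; omega
  rw [Finset.sum_congr rfl hterm]
  have hT : (∑ i ∈ Finset.Icc 1 n, (dstep D i - 2*i)) + (n^2 + n)
      = ∑ i ∈ Finset.Icc 1 n, dstep D i := by
    have : n^2 + n = n * (n+1) := by ring
    rw [this, ← gauss n, ← Finset.sum_add_distrib]
    exact Finset.sum_congr rfl (fun i hi => Nat.sub_add_cancel (hdge i hi))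
  omega

end StmtRhs

/-- for every permutation `w` of `{1,…,2n}`,
`z(w) = n² + ∑_{i=1}^n (h_i(p_A(w)) - 1) - ab(w) - bb(w)`
(stated additively to avoid truncated subtraction). -/
theorem stmt18 (n : ℕ) (w : Equiv.Perm (Fin (2 * n))) :
    zstat w + abInv w + bbInv w =
      n ^ 2 + ∑ i ∈ Finset.Icc 1 n, (ht (pAset w) i - 1) := by
  rw [count_main w, ← rhs_eq w]
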